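/- Let G = (V,E) be an undirected graph with V = {1,...,n} where the vertex labels are identified with the DFS numbering. Define p(v) = max{u ∈ N(v) : u < v} if this set is nonempty, and p(v) = 0 otherwise. If the numbering of G is a valid DFS numbering (i.e., arises from some depth-first search run), then for every vertex v, p(v) is the parent of v in the DFS forest (with p(v) = 0 exactly when v is the first-discovered vertex of its connected component). -/

import Mathlib

open Classical

/-- `adj` is (the adjacency relation of) a simple undirected graph on vertex set `{1,…,n}`. -/
def IsGraphOn (n : ℕ) (adj : ℕ → ℕ → Prop) : Prop :=
  Symmetric adj ∧ ∀ u v, adj u v → 1 ≤ u ∧ u ≤ n ∧ 1 ≤ v ∧ v ≤ n ∧ u ≠ v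

/-- `p(v)`: the largest neighbour of `v` that is smaller than `v`, and `0` if none exists
(`sSup ∅ = 0` in `ℕ`). -/
noncomputable def par (adj : ℕ → ℕ → Prop) (v : ℕ) : ℕ :=
  sSup {u | adj u v ∧ u < v}

/-- `(v, {u,w})` is a conflicting pair: `{u,w}` is an edge and `p(v) < u < v < w`. -/
def Conflict (adj : ℕ → ℕ → Prop) (v u w : ℕ) : Prop :=
  adj u w ∧ par adj v < u ∧ u < v ∧ v < w

/-- One step of a (nondeterministic) depth-first search.  The state consists of the list of
already discovered vertices, in order of discovery and together with the recorded (possibly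
virtual) parent from which each was discovered, and of the stack of active vertices
(the white path, top first). -/
inductive DFSStep (n : ℕ) (adj : ℕ → ℕ → Prop) :
    List (ℕ × ℕ) × List ℕ → List (ℕ × ℕ) × List ℕ → Prop
  | root (v : ℕ) (order : List (ℕ × ℕ)) (hv1 : 1 ≤ v) (hv2 : v ≤ n)
      (hnd : v ∉ order.map Prod.fst) :
      DFSStep n adj (order, []) (order ++ [(v, 0)], [v])
  | descend (v t : ℕ) (order : List (ℕ × ℕ)) (stack : List ℕ)
      (hadj : adj t v) (hnd : v ∉ order.map Prod.fst) :
      DFSStep n adj (order, t :: stack) (order ++ [(v, t)], v :: t :: stack)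
  | backtrack (t : ℕ) (order : List (ℕ × ℕ)) (stack : List ℕ)
      (hall : ∀ u, adj t u → u ∈ order.map Prod.fst) :
      DFSStep n adj (order, t :: stack) (order, stack)

/-- A complete DFS run discovering the vertices in the order given by the list `order`. -/
def DFSRun (n : ℕ) (adj : ℕ → ℕ → Prop) (order : List (ℕ × ℕ)) : Prop :=
  Relation.ReflTransGen (DFSStep n adj) ([], []) (order, [])

/-- The labelling `f` is a valid DFS numbering of the graph: some DFS run discovers the
vertices in the order of increasing labels `1, 2, …, n`. -/
def ValidDFSLabel (n : ℕ) (adj : ℕ → ℕ → Prop) (f : ℕ → ℕ) : Prop :=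
  ∃ order, DFSRun n adj order ∧ (order.map Prod.fst).map f = List.range' 1 n

/-- The identity labelling on `{1,…,n}` is a valid DFS numbering of the graph. -/
def ValidDFS (n : ℕ) (adj : ℕ → ℕ → Prop) : Prop :=
  ValidDFSLabel n adj id

/-- The graph is connected (on its vertex set `{1,…,n}`). -/
def ConnOn (n : ℕ) (adj : ℕ → ℕ → Prop) : Prop :=
  ∀ u v, 1 ≤ u → u ≤ n → 1 ≤ v → v ≤ n → Relation.ReflTransGen adj u v

/-- The degree of a vertex. -/
noncomputable def degree (adj : ℕ → ℕ → Prop) (v : ℕ) : ℕ :=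
  Set.ncard {u | adj u v}

/-- The size `|E △ E'|` of the symmetric difference of the edge sets of two graphs
(given by symmetric adjacency relations). -/
noncomputable def edgeDiff (a b : ℕ → ℕ → Prop) : ℕ :=
  Set.ncard {p : ℕ × ℕ | p.1 < p.2 ∧ ¬(a p.1 p.2 ↔ b p.1 p.2)}

/-- If the identity numbering of `G` is a valid DFS numbering, then in any
DFS run realising it every vertex `v` is discovered from `p(v)` (with virtual parent `0`
recorded for roots), i.e. `p(v)` is the parent of `v` in the DFS forest; moreover
`p(v) = 0` exactly when `v` is the first-discovered (= smallest-numbered) vertex of its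
connected component. -/

lemma chain'_gt_head_le {t : ℕ} {l : List ℕ} (h : List.Chain' (· > ·) (t :: l)) :
    ∀ u ∈ t :: l, u ≤ t := by
  intro u hu
  rcases List.mem_cons.1 hu with rfl | hu
  · exact le_rfl
  · exact le_of_lt (List.rel_of_pairwise_cons (List.isChain_iff_pairwise.1 h) hu)

lemma par_eq_zero_of_empty {adj : ℕ → ℕ → Prop} {v : ℕ}
    (h : ∀ u, adj u v → ¬ u < v) : par adj v = 0 := by
  have he : {u | adj u v ∧ u < v} = ∅ := by
    ext u
    simp only [Set.mem_setOf_eq, Set.mem_empty_iff_false, iff_false, not_and]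
    exact h u
  rw [par, he, csSup_empty]
  rfl

lemma par_eq_of_greatest {adj : ℕ → ℕ → Prop} {v t : ℕ} (hadj : adj t v) (hlt : t < v)
    (hmax : ∀ u, adj u v → u < v → u ≤ t) : par adj v = t :=
  IsGreatest.csSup_eq ⟨⟨hadj, hlt⟩, fun u hu => hmax u hu.1 hu.2⟩

/-- The invariant maintained by a DFS run whose discovery order is `1,2,…`. -/
def DInv (adj : ℕ → ℕ → Prop) (O : List (ℕ × ℕ)) (S : List ℕ) : Prop :=
  List.Chain' (· > ·) S ∧
  (∀ s ∈ S, s ∈ O.map Prod.fst) ∧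
  (∀ u ∈ O.map Prod.fst, u ∉ S → ∀ w, adj u w → w ∈ O.map Prod.fst) ∧
  (∀ p ∈ O, p.2 = par adj p.1) ∧
  (∀ p ∈ O, p.2 = 0 → ∀ u, 1 ≤ u → Relation.ReflTransGen adj u p.1 → p.1 ≤ u)

lemma append_range'_aux {O : List (ℕ × ℕ)} {v t : ℕ}
    (h : ((O ++ [(v, t)]).map Prod.fst) = List.range' 1 ((O ++ [(v, t)]).length)) :
    O.map Prod.fst = List.range' 1 O.length ∧ v = O.length + 1 := by
  have hlen : (O ++ [(v, t)]).length = O.length + 1 := by simp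
  rw [hlen, List.range'_concat, List.map_append] at h
  have h2 := List.append_inj' h (by simp)
  have h3 : ([(v, t)].map Prod.fst) = [1 + 1 * O.length] := h2.2
  simp only [List.map_cons, List.map_nil, List.cons.injEq] at h3
  exact ⟨h2.1, by omega⟩

lemma inv_of_run (n : ℕ) (adj : ℕ → ℕ → Prop) (hG : IsGraphOn n adj)
    (st : List (ℕ × ℕ) × List ℕ)
    (h : Relation.ReflTransGen (DFSStep n adj) ([], []) st) :
    st.1.map Prod.fst = List.range' 1 st.1.length → DInv adj st.1 st.2 := by
  induction h with
  | refl =>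
    intro _
    refine ⟨List.isChain_nil, by simp, by simp, by simp, by simp⟩
  | tail hab hbc ih =>
    cases hbc with
    | root v order hv1 hv2 hnd =>
      intro hO'
      obtain ⟨hO, hv⟩ := append_range'_aux hO'
      obtain ⟨hc, hsub, hcl, hpar, hmin⟩ := ih hO
      have hmemO : ∀ u, 1 ≤ u → u < v → u ∈ order.map Prod.fst := by
        intro u h1 h2
        rw [hO, List.mem_range'_1]
        omega
      have hclosed : ∀ u ∈ order.map Prod.fst, ∀ w, adj u w → w ∈ order.map Prod.fst :=
        fun u hu => hcl u hu (by simp)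
      have hnov : ∀ u, adj u v → ¬ u < v := by
        intro u hu hlt
        exact hnd (hclosed u (hmemO u (hG.2 u v hu).1 hlt) v hu)
      have hparv : par adj v = 0 := par_eq_zero_of_empty hnov
      refine ⟨List.isChain_singleton v, ?_, ?_, ?_, ?_⟩
      · intro s hs
        simp only [List.mem_singleton] at hs
        subst hs
        simp
      · intro u hu hnS w hw
        simp only [List.map_append, List.mem_append, List.map_cons, List.map_nil,
          List.mem_singleton] at hu ⊢
        rcases hu with hu | rfl
        · exact Or.inl (hclosed u hu w hw)
        · exact absurd (List.mem_singleton.2 rfl) hnS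
      · intro p hp
        rcases List.mem_append.1 hp with hp | hp
        · exact hpar p hp
        · simp only [List.mem_singleton] at hp
          subst hp
          exact hparv.symm
      · intro p hp hp2 u h1 hr
        rcases List.mem_append.1 hp with hp | hp
        · exact hmin p hp hp2 u h1 hr
        · simp only [List.mem_singleton] at hp
          subst hp
          by_contra hcon
          push_neg at hcon
          have key : ∀ a b, Relation.ReflTransGen adj a b →
              a ∈ order.map Prod.fst → b ∈ order.map Prod.fst := by
            intro a b hab
            induction hab with
            | refl => exact id
            | tail _ h2 ih2 => exact fun ha => hclosed _ (ih2 ha) _ h2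
          exact hnd (key u v hr (hmemO u h1 hcon))
    | descend v t order stack hadj hnd =>
      intro hO'
      obtain ⟨hO, hv⟩ := append_range'_aux hO'
      obtain ⟨hc, hsub, hcl, hpar, hmin⟩ := ih hO
      have htmem : t ∈ order.map Prod.fst := hsub t List.mem_cons_self
      have htb : 1 ≤ t ∧ t < 1 + order.length := by
        rw [hO, List.mem_range'_1] at htmem
        exact htmem
      have htlt : t < v := by omega
      have hmemO : ∀ u, 1 ≤ u → u < v → u ∈ order.map Prod.fst := by
        intro u h1 h2
        rw [hO, List.mem_range'_1]
        omega
      have hmax : ∀ u, adj u v → u < v → u ≤ t := by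
        intro u hu hlt
        have huO := hmemO u (hG.2 u v hu).1 hlt
        by_cases hS : u ∈ t :: stack
        · exact chain'_gt_head_le hc u hS
        · exact absurd (hcl u huO hS v hu) hnd
      have hparv : par adj v = t := par_eq_of_greatest hadj htlt hmax
      refine ⟨?_, ?_, ?_, ?_, ?_⟩
      · exact List.isChain_cons_cons.2 ⟨htlt, hc⟩
      · intro s hs
        simp only [List.map_append, List.mem_append, List.map_cons, List.map_nil,
          List.mem_singleton]
        rcases List.mem_cons.1 hs with rfl | hs
        · exact Or.inr rfl
        · exact Or.inl (hsub s hs)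
      · intro u hu hnS w hw
        simp only [List.map_append, List.mem_append, List.map_cons, List.map_nil,
          List.mem_singleton] at hu ⊢
        rcases hu with hu | rfl
        · have : u ∉ t :: stack := fun h => hnS (List.mem_cons_of_mem v h)
          exact Or.inl (hcl u hu this w hw)
        · exact absurd List.mem_cons_self hnS
      · intro p hp
        rcases List.mem_append.1 hp with hp | hp
        · exact hpar p hp
        · simp only [List.mem_singleton] at hp
          subst hp
          exact hparv.symm
      · intro p hp hp2 u h1 hr
        rcases List.mem_append.1 hp with hp | hp
        · exact hmin p hp hp2 u h1 hr
        · simp only [List.mem_singleton] at hp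
          subst hp
          exact absurd hp2 (by simp; omega)
    | backtrack t order stack hall =>
      intro hO
      obtain ⟨hc, hsub, hcl, hpar, hmin⟩ := ih hO
      refine ⟨hc.tail, ?_, ?_, hpar, hmin⟩
      · exact fun s hs => hsub s (List.mem_cons_of_mem t hs)
      · intro u hu hnS w hw
        by_cases ht : u = t
        · subst ht
          exact hall w hw
        · have : u ∉ t :: stack := by
            simp only [List.mem_cons, not_or]
            exact ⟨ht, hnS⟩
          exact hcl u hu this w hw

theorem dfs_parent_eq_par (n : ℕ) (adj : ℕ → ℕ → Prop) (hG : IsGraphOn n adj)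
    (order : List (ℕ × ℕ)) (hrun : DFSRun n adj order)
    (hnum : order.map Prod.fst = List.range' 1 n) :
    (∀ p ∈ order, p.2 = par adj p.1) ∧
    (∀ v, 1 ≤ v → v ≤ n →
      (par adj v = 0 ↔ ∀ u, 1 ≤ u → Relation.ReflTransGen adj u v → v ≤ u)) := by
  have hlen : order.length = n := by
    have := congrArg List.length hnum
    simpa using this
  have hinv := inv_of_run n adj hG (order, []) hrun (by rw [hlen]; exact hnum)
  obtain ⟨-, -, -, hpar, hmin⟩ := hinv
  refine ⟨hpar, ?_⟩
  intro v h1 h2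
  constructor
  · intro hp0 u hu hr
    have hv : v ∈ order.map Prod.fst := by
      rw [hnum, List.mem_range'_1]
      omega
    obtain ⟨p, hpmem, hp⟩ := List.mem_map.1 hv
    subst hp
    have hz : p.2 = 0 := by rw [hpar p hpmem, hp0]
    exact hmin p hpmem hz u hu hr
  · intro hm
    apply par_eq_zero_of_empty
    intro u hu hlt
    have := hm u (hG.2 u v hu).1 (Relation.ReflTransGen.single hu)
    omega
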